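/- arXiv:1911.11338 — 2 statements merged into one kernel-verified Lean document; each statement's English description precedes it below -/
import Mathlib

section
/- In the Friedkin-Johnsen model, as the uniform scaling factor a of the graph Laplacian tends to infinity, the steady state x̂' = (aL + K)⁻¹ B K 1 converges to the constant vector α·1, where α = (Σ_v κ_v x̂_v)/(Σ_v κ_v) is the κ-weighted average of the original steady state x̂ = (L+K)⁻¹ B K 1. -/
open Matrix

noncomputable section

/-- Moore–Penrose pseudoinverse conditions. -/
def IsMoorePenrose {V : Type*} [Fintype V] [DecidableEq V]
    (L Lp : Matrix V V ℝ) : Prop :=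
  L * Lp * L = L ∧ Lp * L * Lp = Lp ∧ (L * Lp)ᵀ = L * Lp ∧ (Lp * L)ᵀ = Lp * L

/-- Laplacian of a weighted graph given by weight function `w`. -/
def lapOf {V : Type*} [Fintype V] [DecidableEq V] (w : V → V → ℝ) : Matrix V V ℝ :=
  Matrix.of fun i j => if i = j then ∑ k, w i k else - w i j

/-- The vector `e_u - e_v`. -/
def bvec {V : Type*} [DecidableEq V] (u v : V) : V → ℝ :=
  Pi.single u 1 - Pi.single v 1

/-- The all-ones matrix. -/
def onesM (V : Type*) [Fintype V] : Matrix V V ℝ := Matrix.of fun _ _ => 1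

section Helpers

variable {n : ℕ} (w : Fin n → Fin n → ℝ)

lemma lap_mulVec (hw0 : ∀ i, w i i = 0) (x : Fin n → ℝ) (i : Fin n) :
    (lapOf w *ᵥ x) i = ∑ j, w i j * (x i - x j) := by
  have key : ∀ j, lapOf w i j * x j
      = (if i = j then (∑ k, w i k) * x i else 0) - w i j * x j := by
    intro j
    rcases eq_or_ne i j with h | h
    · subst h; simp [lapOf, hw0 i]
    · simp [lapOf, h]
  calc (lapOf w *ᵥ x) i = ∑ j, lapOf w i j * x j := rfl
    _ = ∑ j, ((if i = j then (∑ k, w i k) * x i else 0) - w i j * x j) := by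
        exact Finset.sum_congr rfl fun j _ => key j
    _ = (∑ k, w i k) * x i - ∑ j, w i j * x j := by
        rw [Finset.sum_sub_distrib, Finset.sum_ite_eq Finset.univ i]
        simp
    _ = ∑ j, w i j * (x i - x j) := by
        rw [Finset.sum_mul]
        rw [← Finset.sum_sub_distrib]
        exact Finset.sum_congr rfl fun j _ => by ring

lemma lap_symm (hwsymm : ∀ i j, w i j = w j i) : (lapOf w)ᵀ = lapOf w := by
  ext i j
  rcases eq_or_ne i j with h | h
  · subst h; rfl
  · simp only [transpose_apply, lapOf, of_apply, if_neg h, if_neg (Ne.symm h)]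
    rw [hwsymm i j]

lemma lap_quad (hw0 : ∀ i, w i i = 0) (hwsymm : ∀ i j, w i j = w j i) (x : Fin n → ℝ) :
    2 * (x ⬝ᵥ (lapOf w *ᵥ x)) = ∑ i, ∑ j, w i j * (x i - x j) ^ 2 := by
  have h1 : x ⬝ᵥ (lapOf w *ᵥ x) = ∑ i, ∑ j, w i j * (x i * (x i - x j)) := by
    simp only [dotProduct]
    refine Finset.sum_congr rfl fun i _ => ?_
    rw [lap_mulVec w hw0, Finset.mul_sum]
    exact Finset.sum_congr rfl fun j _ => by ring
  have h2 : x ⬝ᵥ (lapOf w *ᵥ x) = ∑ i, ∑ j, w i j * (x j * (x j - x i)) := by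
    rw [h1, Finset.sum_comm]
    exact Finset.sum_congr rfl fun i _ => Finset.sum_congr rfl fun j _ => by rw [hwsymm i j]
  calc 2 * (x ⬝ᵥ (lapOf w *ᵥ x))
      = (∑ i, ∑ j, w i j * (x i * (x i - x j))) + ∑ i, ∑ j, w i j * (x j * (x j - x i)) := by
        rw [← h1, ← h2]; ring
    _ = ∑ i, ∑ j, (w i j * (x i * (x i - x j)) + w i j * (x j * (x j - x i))) := by
        rw [← Finset.sum_add_distrib]
        exact Finset.sum_congr rfl fun i _ => by rw [← Finset.sum_add_distrib]
    _ = ∑ i, ∑ j, w i j * (x i - x j) ^ 2 :=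
        Finset.sum_congr rfl fun i _ => Finset.sum_congr rfl fun j _ => by ring

lemma lap_psd (hw0 : ∀ i, w i i = 0) (hwsymm : ∀ i j, w i j = w j i)
    (hwnn : ∀ i j, 0 ≤ w i j) (x : Fin n → ℝ) : 0 ≤ x ⬝ᵥ (lapOf w *ᵥ x) := by
  nlinarith [lap_quad w hw0 hwsymm x,
    Finset.sum_nonneg fun i (_ : i ∈ Finset.univ) =>
      Finset.sum_nonneg fun j (_ : j ∈ Finset.univ) =>
        mul_nonneg (hwnn i j) (sq_nonneg (x i - x j))]

lemma lap_ker (hw0 : ∀ i, w i i = 0) (hwsymm : ∀ i j, w i j = w j i)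
    (hwnn : ∀ i j, 0 ≤ w i j) (x : Fin n → ℝ)
    (hx : x ⬝ᵥ (lapOf w *ᵥ x) = 0) : lapOf w *ᵥ x = 0 := by
  have hsum : ∑ i, ∑ j, w i j * (x i - x j) ^ 2 = 0 := by
    rw [← lap_quad w hw0 hwsymm, hx]; ring
  have hterm : ∀ i j, w i j * (x i - x j) ^ 2 = 0 := by
    intro i j
    have h1 := (Finset.sum_eq_zero_iff_of_nonneg (fun i _ =>
      Finset.sum_nonneg fun j _ => mul_nonneg (hwnn i j) (sq_nonneg (x i - x j)))).mp hsum
        i (Finset.mem_univ i)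
    exact (Finset.sum_eq_zero_iff_of_nonneg (fun j _ =>
      mul_nonneg (hwnn i j) (sq_nonneg (x i - x j)))).mp h1 j (Finset.mem_univ j)
  funext i
  rw [lap_mulVec w hw0]
  refine Finset.sum_eq_zero fun j _ => ?_
  rcases mul_eq_zero.mp (hterm i j) with h | h
  · rw [h, zero_mul]
  · rw [pow_eq_zero_iff (by norm_num) |>.mp h, mul_zero]

end Helpers

lemma det_ne_of_quad {n : ℕ} (A : Matrix (Fin n) (Fin n) ℝ)
    (h : ∀ v : Fin n → ℝ, v ≠ 0 → v ⬝ᵥ (A *ᵥ v) ≠ 0) : A.det ≠ 0 := by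
  intro hdet
  obtain ⟨v, hv, hAv⟩ := Matrix.exists_mulVec_eq_zero_iff.mpr hdet
  exact h v hv (by rw [hAv, dotProduct_zero])

lemma diag_quad {n : ℕ} (κ : Fin n → ℝ) (x : Fin n → ℝ) :
    x ⬝ᵥ (diagonal κ *ᵥ x) = ∑ i, κ i * x i ^ 2 := by
  simp only [dotProduct, mulVec_diagonal]
  exact Finset.sum_congr rfl fun i _ => by ring

lemma diag_quad_pos {n : ℕ} (κ : Fin n → ℝ) (hκ : ∀ v, 0 < κ v) (x : Fin n → ℝ) (hx : x ≠ 0) :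
    0 < x ⬝ᵥ (diagonal κ *ᵥ x) := by
  rw [diag_quad]
  obtain ⟨i, hi⟩ := Function.ne_iff.mp hx
  exact Finset.sum_pos' (fun j _ => mul_nonneg (hκ j).le (sq_nonneg _))
    ⟨i, Finset.mem_univ i, mul_pos (hκ i) (by exact pow_pos (abs_pos.mpr hi) 2 |>.trans_eq (by rw [sq_abs]))⟩

lemma vmv_mulVec {n : ℕ} (κ x : Fin n → ℝ) :
    vecMulVec κ κ *ᵥ x = fun i => κ i * (κ ⬝ᵥ x) := by
  funext i
  simp [vecMulVec, mulVec, dotProduct, Finset.mul_sum, mul_assoc]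

lemma vmv_quad {n : ℕ} (κ x : Fin n → ℝ) :
    x ⬝ᵥ (vecMulVec κ κ *ᵥ x) = (κ ⬝ᵥ x) ^ 2 := by
  rw [vmv_mulVec]
  simp only [dotProduct]
  have : ∀ i, x i * (κ i * ∑ j, κ j * x j) = (κ i * x i) * ∑ j, κ j * x j :=
    fun i => by ring
  rw [Finset.sum_congr rfl fun i _ => this i, ← Finset.sum_mul]
  ring

theorem fj_steady_state_limit {n : ℕ}
    (w : Fin n → Fin n → ℝ) (L : Matrix (Fin n) (Fin n) ℝ)
    (κ β : Fin n → ℝ)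
    (hw0 : ∀ i, w i i = 0) (hwsymm : ∀ i j, w i j = w j i) (hwnn : ∀ i j, 0 ≤ w i j)
    (hL : L = lapOf w)
    (hconn : ∀ x : Fin n → ℝ, L *ᵥ x = 0 → ∃ c : ℝ, x = fun _ => c)
    (hκ : ∀ v, 0 < κ v) (hβ : ∀ v, β v ∈ Set.Icc (0 : ℝ) 1)
    (xhat : Fin n → ℝ)
    (hx : xhat = (L + diagonal κ)⁻¹ *ᵥ ((diagonal β * diagonal κ) *ᵥ fun _ => 1))
    (α : ℝ) (hα : α = (∑ v, κ v * xhat v) / (∑ v, κ v)) :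
    Filter.Tendsto
      (fun a : ℝ => (a • L + diagonal κ)⁻¹ *ᵥ ((diagonal β * diagonal κ) *ᵥ fun _ => 1))
      Filter.atTop (nhds (fun _ => α)) := by
  rcases Nat.eq_zero_or_pos n with hn | hn
  · subst hn
    have h : (fun a : ℝ => (a • L + diagonal κ)⁻¹ *ᵥ ((diagonal β * diagonal κ) *ᵥ fun _ => 1))
        = fun _ => (fun _ => α) := funext fun a => Subsingleton.elim _ _
    rw [h]; exact tendsto_const_nhds
  subst hL
  have hne : Nonempty (Fin n) := Fin.pos_iff_nonempty.mp hn
  set Sκ := ∑ v, κ v with hSκdef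
  have hSκ : 0 < Sκ := Finset.sum_pos (fun v _ => hκ v) Finset.univ_nonempty
  set b : Fin n → ℝ := fun i => β i * κ i with hbdef
  have hBK1 : (diagonal β * diagonal κ) *ᵥ (fun _ => (1:ℝ)) = b := by
    funext i; rw [diagonal_mul_diagonal]; simp [mulVec_diagonal, hbdef]
  have hL1 : lapOf w *ᵥ (fun _ => (1:ℝ)) = 0 := by
    funext i; rw [lap_mulVec w hw0]; simp
  -- symmetric matrix dot-with-ones identity
  have hdot1 : ∀ (A : Matrix (Fin n) (Fin n) ℝ), Aᵀ = A → ∀ y : Fin n → ℝ,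
      (fun _ => (1:ℝ)) ⬝ᵥ (A *ᵥ y) = (A *ᵥ fun _ => (1:ℝ)) ⬝ᵥ y := by
    intro A hA y
    rw [dotProduct_mulVec, ← hA, vecMul_transpose, hA]
  -- invertibility of a•L + K for a ≥ 0
  have hdet1 : ∀ a : ℝ, 0 ≤ a → (a • lapOf w + diagonal κ).det ≠ 0 := by
    intro a ha
    refine det_ne_of_quad _ fun v hv => ?_
    rw [add_mulVec, dotProduct_add, smul_mulVec, dotProduct_smul, smul_eq_mul]
    have h1 := lap_psd w hw0 hwsymm hwnn v
    have h2 := diag_quad_pos κ hκ v hv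
    have h3 := mul_nonneg ha h1
    positivity
  -- invertibility of M t = L + κκᵀ + t•K for t ≥ 0
  have hdetM : ∀ t : ℝ, 0 ≤ t → (lapOf w + vecMulVec κ κ + t • diagonal κ).det ≠ 0 := by
    intro t ht
    refine det_ne_of_quad _ fun v hv => ?_
    rw [add_mulVec, add_mulVec, dotProduct_add, dotProduct_add, smul_mulVec,
      dotProduct_smul, vmv_quad, smul_eq_mul]
    intro h0
    have h1 := lap_psd w hw0 hwsymm hwnn v
    have h2 : (0:ℝ) ≤ (κ ⬝ᵥ v) ^ 2 := sq_nonneg _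
    have h3 : 0 ≤ v ⬝ᵥ (diagonal κ *ᵥ v) := by
      rw [diag_quad]
      exact Finset.sum_nonneg fun i _ => mul_nonneg (hκ i).le (sq_nonneg _)
    have h4 := mul_nonneg ht h3
    have hquad0 : v ⬝ᵥ (lapOf w *ᵥ v) = 0 := by linarith
    have hKv : κ ⬝ᵥ v = 0 := by
      have : (κ ⬝ᵥ v) ^ 2 = 0 := by linarith
      exact pow_eq_zero_iff (by norm_num) |>.mp this
    obtain ⟨c, hc⟩ := hconn v (lap_ker w hw0 hwsymm hwnn v hquad0)
    have hcS : c * Sκ = 0 := by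
      rw [hc] at hKv
      have he : κ ⬝ᵥ (fun _ : Fin n => c) = c * Sκ := by
        simp only [dotProduct, hSκdef, Finset.mul_sum]
        exact Finset.sum_congr rfl fun i _ => mul_comm (κ i) c
      rw [← he, hKv]
    have hc0 : c = 0 := by
      rcases mul_eq_zero.mp hcS with h | h
      · exact h
      · exact absurd h hSκ.ne'
    exact hv (by rw [hc, hc0]; funext i; rfl)
  have hdetLK : (lapOf w + diagonal κ).det ≠ 0 := by
    have := hdet1 1 zero_le_one; rwa [one_smul] at this
  -- steady state identity and α
  have hx1 : (lapOf w + diagonal κ) *ᵥ xhat = b := by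
    rw [hx, hBK1, mulVec_mulVec, mul_nonsing_inv _ (isUnit_iff_ne_zero.mpr hdetLK), one_mulVec]
  have hsymLK : (lapOf w + diagonal κ)ᵀ = lapOf w + diagonal κ := by
    rw [transpose_add, lap_symm w hwsymm, diagonal_transpose]
  have hLK1 : (lapOf w + diagonal κ) *ᵥ (fun _ => (1:ℝ)) = κ := by
    rw [add_mulVec, hL1, zero_add]
    funext i; simp [mulVec_diagonal]
  have hκx : κ ⬝ᵥ xhat = ∑ v, b v := by
    have h := hdot1 _ hsymLK xhat
    rw [hx1, hLK1] at h
    rw [← h]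
    simp [dotProduct]
  have hαSκ : α * Sκ = ∑ v, b v := by
    rw [hα, div_mul_cancel₀ _ hSκ.ne', ← hκx]
    simp [dotProduct]
  -- the correction term
  set r : Fin n → ℝ := fun i => b i - α * κ i with hrdef
  set M : ℝ → Matrix (Fin n) (Fin n) ℝ :=
    fun t => lapOf w + vecMulVec κ κ + t • diagonal κ with hMdef
  set u : ℝ → (Fin n → ℝ) := fun t => (M t)⁻¹ *ᵥ r with hudef
  have hMu : ∀ t : ℝ, 0 ≤ t → M t *ᵥ u t = r := by
    intro t ht
    rw [hudef]
    rw [mulVec_mulVec, mul_nonsing_inv _ (isUnit_iff_ne_zero.mpr (hdetM t ht)), one_mulVec]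
  have hMsym : ∀ t : ℝ, (M t)ᵀ = M t := by
    intro t
    rw [hMdef]
    rw [transpose_add, transpose_add, transpose_smul, lap_symm w hwsymm, diagonal_transpose]
    congr 1
    congr 1
    ext i j
    simp [vecMulVec, mul_comm]
  have hM1 : ∀ t : ℝ, M t *ᵥ (fun _ => (1:ℝ)) = (Sκ + t) • κ := by
    intro t
    rw [hMdef]
    rw [add_mulVec, add_mulVec, hL1, vmv_mulVec, smul_mulVec]
    funext i
    simp [mulVec_diagonal, dotProduct, hSκdef]
    ring
  have h1r : (fun _ => (1:ℝ)) ⬝ᵥ r = 0 := by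
    simp only [hrdef, dotProduct, one_mul]
    rw [Finset.sum_sub_distrib, ← Finset.mul_sum, ← hSκdef, hαSκ, sub_self]
  have hκu : ∀ t : ℝ, 0 ≤ t → κ ⬝ᵥ u t = 0 := by
    intro t ht
    have h := hdot1 (M t) (hMsym t) (u t)
    rw [hMu t ht, hM1 t, h1r, smul_dotProduct, smul_eq_mul] at h
    have hpos : Sκ + t > 0 := by linarith
    rcases mul_eq_zero.mp h.symm with h' | h'
    · exact absurd h' hpos.ne'
    · exact h'
  -- main eventual identity
  have hmain : ∀ a : ℝ, 0 < a →
      (a • lapOf w + diagonal κ)⁻¹ *ᵥ b = (fun _ => α) + a⁻¹ • u a⁻¹ := by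
    intro a ha
    have hainv : (0:ℝ) ≤ a⁻¹ := inv_nonneg.mpr ha.le
    have hMA : (a • lapOf w + diagonal κ) *ᵥ ((fun _ => α) + a⁻¹ • u a⁻¹) = b := by
      have hA1 : (a • lapOf w + diagonal κ) *ᵥ (fun _ => α) = α • κ := by
        have hconst : (fun _ : Fin n => α) = α • (fun _ : Fin n => (1:ℝ)) := by
          funext i; simp
        rw [hconst, mulVec_smul, add_mulVec, smul_mulVec, hL1, smul_zero, zero_add]
        congr 1
        funext i; simp [mulVec_diagonal]
      have hMu' := hMu a⁻¹ hainv
      rw [hMdef] at hMu'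
      rw [add_mulVec, add_mulVec, vmv_mulVec, hκu a⁻¹ hainv, smul_mulVec] at hMu'
      have hzero : (fun i => κ i * (0:ℝ)) = 0 := by funext i; simp
      rw [hzero, add_zero] at hMu'
      -- hMu' : lapOf w *ᵥ u a⁻¹ + a⁻¹ • (diagonal κ *ᵥ u a⁻¹) = r
      have hA2 : (a • lapOf w + diagonal κ) *ᵥ (a⁻¹ • u a⁻¹) = r := by
        rw [mulVec_smul, add_mulVec, smul_mulVec, smul_add, smul_smul,
          inv_mul_cancel₀ ha.ne', one_smul]
        exact hMu'
      rw [mulVec_add, hA1, hA2]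
      funext i
      simp [hrdef]
    rw [← hMA, mulVec_mulVec, nonsing_inv_mul _ (isUnit_iff_ne_zero.mpr (hdet1 a ha.le)),
      one_mulVec]
  -- the limit
  simp only [hBK1]
  have hev : (fun a : ℝ => (fun _ : Fin n => α) + a⁻¹ • u a⁻¹) =ᶠ[Filter.atTop]
      (fun a : ℝ => (a • lapOf w + diagonal κ)⁻¹ *ᵥ b) := by
    filter_upwards [Filter.eventually_gt_atTop 0] with a ha
    exact (hmain a ha).symm
  refine Filter.Tendsto.congr' hev ?_
  have htinv : Filter.Tendsto (fun a : ℝ => a⁻¹) Filter.atTop (nhds 0) :=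
    tendsto_inv_atTop_zero
  have hMcont : Continuous M := by
    rw [hMdef]
    exact continuous_const.add (continuous_id.smul continuous_const)
  have hMt : Filter.Tendsto (fun a : ℝ => M a⁻¹) Filter.atTop (nhds (M 0)) :=
    (hMcont.tendsto 0).comp htinv
  have hinvc : ContinuousAt Inv.inv (M 0) := by
    refine continuousAt_matrix_inv _ ?_
    rw [Ring.inverse_eq_inv']
    exact continuousAt_inv₀ (hdetM 0 le_rfl)
  have hMinv : Filter.Tendsto (fun a : ℝ => (M a⁻¹)⁻¹) Filter.atTop (nhds (M 0)⁻¹) :=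
    Filter.Tendsto.comp hinvc hMt
  have huT : Filter.Tendsto (fun a : ℝ => u a⁻¹) Filter.atTop (nhds ((M 0)⁻¹ *ᵥ r)) := by
    have hc : Continuous (fun A : Matrix (Fin n) (Fin n) ℝ => A *ᵥ r) :=
      continuous_id.matrix_mulVec continuous_const
    exact (hc.tendsto _).comp hMinv
  have hz : Filter.Tendsto (fun a : ℝ => a⁻¹ • u a⁻¹) Filter.atTop
      (nhds (0 : Fin n → ℝ)) := by
    have := htinv.smul huT
    simpa using this
  have hfinal := (tendsto_const_nhds (x := fun _ : Fin n => α) (f := Filter.atTop)).add hz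
  simpa using hfinal
end
end

section
/- In the q-Barbell graph (two unweighted q-cliques joined by a single bridge edge), if the French-DeGroot leaders s₀ and s₁ lie in the same clique and neither is a bridge endpoint, then P = 1/2 and D = q/2. -/
open Matrix

noncomputable section

/-- Weight function of the `q`-Barbell graph: two unweighted complete graphs on
`Fin q ⊕ Fin q` joined by a single bridge edge between `astar` (left) and `bstar` (right). -/
def barbellW (q : ℕ) (astar bstar : Fin q) :
    (Fin q ⊕ Fin q) → (Fin q ⊕ Fin q) → ℝ
  | Sum.inl i, Sum.inl j => if i = j then 0 else 1
  | Sum.inr i, Sum.inr j => if i = j then 0 else 1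
  | Sum.inl i, Sum.inr j => if i = astar ∧ j = bstar then 1 else 0
  | Sum.inr i, Sum.inl j => if j = astar ∧ i = bstar then 1 else 0


lemma mp_unique {V : Type*} [Fintype V] [DecidableEq V]
    (L X Y : Matrix V V ℝ) (hX : IsMoorePenrose L X) (hY : IsMoorePenrose L Y) :
    X = Y := by
  obtain ⟨hX1, hX2, hX3, hX4⟩ := hX
  obtain ⟨hY1, hY2, hY3, hY4⟩ := hY
  have h1 : L * X = L * Y := by
    calc L * X = (L * Y * L) * X := by rw [hY1]
    _ = (L * Y) * (L * X) := by simp only [Matrix.mul_assoc]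
    _ = (L * Y)ᵀ * (L * X)ᵀ := by rw [hY3, hX3]
    _ = ((L * X) * (L * Y))ᵀ := by rw [← Matrix.transpose_mul]
    _ = ((L * X * L) * Y)ᵀ := by simp only [Matrix.mul_assoc]
    _ = (L * Y)ᵀ := by rw [hX1]
    _ = L * Y := hY3
  have h2 : X * L = Y * L := by
    calc X * L = X * (L * Y * L) := by rw [hY1]
    _ = (X * L) * (Y * L) := by simp only [Matrix.mul_assoc]
    _ = (X * L)ᵀ * (Y * L)ᵀ := by rw [hY4, hX4]
    _ = ((Y * L) * (X * L))ᵀ := by rw [← Matrix.transpose_mul]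
    _ = (Y * (L * X * L))ᵀ := by simp only [Matrix.mul_assoc]
    _ = (Y * L)ᵀ := by rw [hX1]
    _ = Y * L := hY4
  calc X = X * L * X := hX2.symm
  _ = X * (L * Y) := by rw [Matrix.mul_assoc, h1]
  _ = (X * L) * Y := by rw [Matrix.mul_assoc]
  _ = (Y * L) * Y := by rw [h2]
  _ = Y := hY2

lemma barbellW_symm (q : ℕ) (astar bstar : Fin q) (i j : Fin q ⊕ Fin q) :
    barbellW q astar bstar i j = barbellW q astar bstar j i := by
  cases i <;> cases j <;> simp [barbellW, eq_comm, and_comm]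

lemma lapOf_symm {V : Type*} [Fintype V] [DecidableEq V] (w : V → V → ℝ)
    (hw : ∀ i j, w i j = w j i) : (lapOf w)ᵀ = lapOf w := by
  ext i j
  simp only [Matrix.transpose_apply, lapOf, Matrix.of_apply]
  rcases eq_or_ne i j with h | h
  · subst h; simp
  · simp [h, Ne.symm h, hw i j]

lemma barbell_rowsum (q : ℕ) (astar bstar : Fin q) (i : Fin q) (hi : i ≠ astar) :
    ∑ k, barbellW q astar bstar (Sum.inl i) k = (q : ℝ) - 1 := by
  rw [Fintype.sum_sum_type]
  have h2 : ∑ j : Fin q, barbellW q astar bstar (Sum.inl i) (Sum.inr j) = 0 := by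
    simp [barbellW, hi]
  have h1 : ∑ j : Fin q, barbellW q astar bstar (Sum.inl i) (Sum.inl j) = (q : ℝ) - 1 := by
    have : ∀ j : Fin q, barbellW q astar bstar (Sum.inl i) (Sum.inl j)
        = 1 - (if i = j then (1 : ℝ) else 0) := by
      intro j; rcases eq_or_ne i j with h | h <;> simp [barbellW, h]
    rw [Finset.sum_congr rfl fun j _ => this j, Finset.sum_sub_distrib]
    simp
  rw [h1, h2, add_zero]

theorem barbell_same_clique {q : ℕ} (astar bstar : Fin q)
    (s0 s1 : Fin q) (hs : s0 ≠ s1) (hs0 : s0 ≠ astar) (hs1 : s1 ≠ astar)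
    (L Lp : Matrix (Fin q ⊕ Fin q) (Fin q ⊕ Fin q) ℝ)
    (hL : L = lapOf (barbellW q astar bstar))
    (hMP : IsMoorePenrose L Lp) :
    (bvec (Sum.inl s1 : Fin q ⊕ Fin q) (Sum.inl s0) ⬝ᵥ (Lp * Lp) *ᵥ
          bvec (Sum.inl s1 : Fin q ⊕ Fin q) (Sum.inl s0)) /
        (bvec (Sum.inl s1 : Fin q ⊕ Fin q) (Sum.inl s0) ⬝ᵥ Lp *ᵥ
          bvec (Sum.inl s1 : Fin q ⊕ Fin q) (Sum.inl s0)) ^ 2 = 1 / 2 ∧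
      1 / (bvec (Sum.inl s1 : Fin q ⊕ Fin q) (Sum.inl s0) ⬝ᵥ Lp *ᵥ
          bvec (Sum.inl s1 : Fin q ⊕ Fin q) (Sum.inl s0)) = (q : ℝ) / 2 := by

  obtain ⟨hMP1, hMP2, hMP3, hMP4⟩ := hMP
  have hq : 0 < q := s0.pos
  have hq0 : (q : ℝ) ≠ 0 := Nat.cast_ne_zero.mpr hq.ne'
  set b : (Fin q ⊕ Fin q) → ℝ := bvec (Sum.inl s1 : Fin q ⊕ Fin q) (Sum.inl s0) with hbdef
  -- L b = q • b
  have hent : ∀ i j : Fin q ⊕ Fin q, i ≠ j →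
      L i j = -(barbellW q astar bstar i j) := by
    intro i j h; rw [hL]; simp [lapOf, h]
  have hdiag : ∀ i : Fin q ⊕ Fin q,
      L i i = ∑ k, barbellW q astar bstar i k := by
    intro i; rw [hL]; simp [lapOf]
  have hbv : ∀ j : Fin q ⊕ Fin q, b j =
      (if j = Sum.inl s1 then 1 else 0) - (if j = Sum.inl s0 then 1 else 0) := by
    intro j; simp [hbdef, bvec, Pi.single_apply]
  have hs' : s1 ≠ s0 := hs.symm
  have hLb : L *ᵥ b = (q : ℝ) • b := by
    have hcol : ∀ i, (L *ᵥ b) i = L i (Sum.inl s1) - L i (Sum.inl s0) := by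
      intro i
      have h1 : L *ᵥ b = L *ᵥ Pi.single (Sum.inl s1) 1 - L *ᵥ Pi.single (Sum.inl s0) 1 := by
        rw [hbdef]; unfold bvec; rw [Matrix.mulVec_sub]
      rw [h1, Matrix.mulVec_single, Matrix.mulVec_single]
      simp
    funext i
    rw [hcol i, Pi.smul_apply, smul_eq_mul, hbv i]
    have hrow1 := barbell_rowsum q astar bstar s1 hs1
    have hrow0 := barbell_rowsum q astar bstar s0 hs0
    rcases i with i | i
    · rcases eq_or_ne i s1 with h | h
      · subst h
        have e1 : L (Sum.inl i) (Sum.inl i) = (q : ℝ) - 1 := by rw [hdiag, hrow1]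
        have e0 : L (Sum.inl i) (Sum.inl s0) = -1 := by
          rw [hent _ _ (by simp [hs'])]
          simp [barbellW, hs']
        rw [e1, e0, if_pos rfl, if_neg (by simp [hs'])]
        ring
      · rcases eq_or_ne i s0 with h0 | h0
        · subst h0
          have e1 : L (Sum.inl i) (Sum.inl s1) = -1 := by
            rw [hent _ _ (by simp [hs])]
            simp [barbellW, hs]
          have e0 : L (Sum.inl i) (Sum.inl i) = (q : ℝ) - 1 := by rw [hdiag, hrow0]
          rw [e1, e0, if_neg (by simp [hs]), if_pos rfl]
          ring
        · have e1 : L (Sum.inl i) (Sum.inl s1) = -1 := by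
            rw [hent _ _ (by simp [h])]
            simp [barbellW, h]
          have e0 : L (Sum.inl i) (Sum.inl s0) = -1 := by
            rw [hent _ _ (by simp [h0])]
            simp [barbellW, h0]
          rw [e1, e0, if_neg (by simp [h]), if_neg (by simp [h0])]
          ring
    · have e1 : L (Sum.inr i) (Sum.inl s1) = 0 := by
        rw [hent _ _ (by simp)]
        simp [barbellW, hs1]
      have e0 : L (Sum.inr i) (Sum.inl s0) = 0 := by
        rw [hent _ _ (by simp)]
        simp [barbellW, hs0]
      rw [e1, e0, if_neg (by simp), if_neg (by simp)]
      ring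
  -- symmetry of L and Lp
  have hLsym : Lᵀ = L := by rw [hL]; exact lapOf_symm _ (barbellW_symm q astar bstar)
  have hLpsym : Lpᵀ = Lp := by
    refine mp_unique L Lpᵀ Lp ?_ ⟨hMP1, hMP2, hMP3, hMP4⟩
    refine ⟨?_, ?_, ?_, ?_⟩
    · calc L * Lpᵀ * L = (Lᵀ * Lp * Lᵀ)ᵀ := by
            simp [Matrix.transpose_mul, Matrix.mul_assoc]
      _ = (L * Lp * L)ᵀ := by rw [hLsym]
      _ = Lᵀ := by rw [hMP1]
      _ = L := hLsym
    · calc Lpᵀ * L * Lpᵀ = (Lp * Lᵀ * Lp)ᵀ := by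
            simp [Matrix.transpose_mul, Matrix.mul_assoc]
      _ = (Lp * L * Lp)ᵀ := by rw [hLsym]
      _ = Lpᵀ := by rw [hMP2]
    · have h : L * Lpᵀ = (Lp * Lᵀ)ᵀ := by simp [Matrix.transpose_mul]
      rw [h, hLsym, hMP4, hMP4]
    · have h : Lpᵀ * L = (Lᵀ * Lp)ᵀ := by simp [Matrix.transpose_mul]
      rw [h, hLsym, hMP3, hMP3]
  have hcomm : Lp * L = L * Lp := by
    calc Lp * L = (Lp * L)ᵀ := hMP4.symm
    _ = Lᵀ * Lpᵀ := Matrix.transpose_mul _ _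
    _ = L * Lp := by rw [hLsym, hLpsym]
  -- (L * Lp) b = b
  have hbrange : b = L *ᵥ ((q : ℝ)⁻¹ • b) := by
    rw [Matrix.mulVec_smul, hLb, smul_smul, inv_mul_cancel₀ hq0, one_smul]
  have hLLpb : (L * Lp) *ᵥ b = b := by
    conv_lhs => rw [hbrange]
    rw [Matrix.mulVec_mulVec, hMP1, ← hbrange]
  -- Lp b = q⁻¹ b
  have hLpb : Lp *ᵥ b = (q : ℝ)⁻¹ • b := by
    have h1 : (q : ℝ) • (Lp *ᵥ b) = b := by
      calc (q : ℝ) • (Lp *ᵥ b) = Lp *ᵥ ((q : ℝ) • b) := (Matrix.mulVec_smul _ _ _).symm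
      _ = Lp *ᵥ (L *ᵥ b) := by rw [hLb]
      _ = (Lp * L) *ᵥ b := Matrix.mulVec_mulVec _ _ _
      _ = (L * Lp) *ᵥ b := by rw [hcomm]
      _ = b := hLLpb
    calc Lp *ᵥ b = (q : ℝ)⁻¹ • ((q : ℝ) • (Lp *ᵥ b)) := by
          rw [smul_smul, inv_mul_cancel₀ hq0, one_smul]
    _ = (q : ℝ)⁻¹ • b := by rw [h1]
  -- b ⬝ b = 2
  have hbb : b ⬝ᵥ b = 2 := by
    rw [hbdef]; unfold bvec
    rw [sub_dotProduct, dotProduct_sub, dotProduct_sub]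
    rw [single_dotProduct, single_dotProduct]
    have h01 : (Sum.inl s1 : Fin q ⊕ Fin q) ≠ Sum.inl s0 := by
      simp [hs']
    simp [Pi.single_apply, h01, h01.symm]
    norm_num
  have hD : b ⬝ᵥ Lp *ᵥ b = 2 / q := by
    rw [hLpb, dotProduct_smul, hbb]
    simp [div_eq_inv_mul]
  have hN : b ⬝ᵥ (Lp * Lp) *ᵥ b = 2 / (q * q) := by
    rw [← Matrix.mulVec_mulVec, hLpb, Matrix.mulVec_smul, hLpb, smul_smul,
      dotProduct_smul, hbb, smul_eq_mul]
    field_simp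
  constructor
  · rw [hN, hD]
    field_simp
  · rw [hD]
    field_simp
end
end
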